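/- Let (A, m) be an abstract complete intersection of dimension d > 0, P a prime ideal with height(m/P) = 1, f ∈ m \ P, and M the d-th syzygy of A/P over A. Then for each i > 0, the support of Ext^i_{A_f}(M_f, M_f) over A_f is contained in the maximal ideal PA_f of A_f. -/

import Mathlib

universe u

open CategoryTheory

/-- A regular local ring: a Noetherian local ring whose maximal ideal can be generated by
`dim Q` elements. -/
def IsRegularLocalRing' (Q : Type u) [CommRing Q] : Prop :=
  IsNoetherianRing Q ∧ ∃ (hQ : IsLocalRing Q) (s : Finset Q),
    Ideal.span (s : Set Q) = @IsLocalRing.maximalIdeal Q _ hQ ∧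
      (s.card : WithBot ℕ∞) = ringKrullDim Q

/-- An abstract complete intersection of codimension `c`. -/
def IsCompleteIntersectionOfCodim (A : Type u) [CommRing A] (c : ℕ) : Prop :=
  IsNoetherianRing A ∧ ∃ (hA : IsLocalRing A) (Q : Type u) (_ : CommRing Q),
    IsRegularLocalRing' Q ∧ ∃ rs : List Q, RingTheory.Sequence.IsRegular Q rs ∧ rs.length = c ∧
      Nonempty ((AdicCompletion (@IsLocalRing.maximalIdeal A _ hA) A) ≃+*
        (Q ⧸ Ideal.span {x | x ∈ rs}))

/-- `Ext^n_A(M, N)` as an `A`-module (via derived functors of `Hom`). -/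
noncomputable def extMod (A : Type u) [CommRing A] (n : ℕ) (M N : Type u)
    [AddCommGroup M] [Module A M] [AddCommGroup N] [Module A N] : ModuleCat A :=
  ((Ext A (ModuleCat A) n).obj (Opposite.op (ModuleCat.of A M))).obj (ModuleCat.of A N)

/-- `IsMinimalSyzygy A d M N` : `M` is (isomorphic to) the `d`-th syzygy of `N` in a
minimal free resolution of `N` over the local ring `A`, expressed through the chain of
short exact sequences `0 → Syz_{k+1} N → F_k → Syz_k N → 0` with `F_k` finite free and
`Syz_{k+1} N ⊆ m·F_k` (minimality). -/
def IsMinimalSyzygy (A : Type u) [CommRing A] [IsLocalRing A] :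
    ℕ → (M : Type u) → [AddCommGroup M] → [Module A M] →
      (N : Type u) → [AddCommGroup N] → [Module A N] → Prop
  | 0, M, _, _, N, _, _ => Nonempty (M ≃ₗ[A] N)
  | d + 1, M, _, _, N, _, _ =>
      ∃ (F : Type u) (_ : AddCommGroup F) (_ : Module A F),
        Module.Free A F ∧ Module.Finite A F ∧
        ∃ ι : M →ₗ[A] F, Function.Injective ι ∧
          LinearMap.range ι ≤ (IsLocalRing.maximalIdeal A) • (⊤ : Submodule A F) ∧
          IsMinimalSyzygy A d (F ⧸ LinearMap.range ι) N


section AuxExt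

open Limits

/-- If the multiplication by `r` on `X` factors through a projective object, then
`r` annihilates `Ext^{n+1}(X, Y)`. -/
lemma ext_ann' {R : Type u} [CommRing R] (X' Y' : ModuleCat.{u} R) (r : R)
    (G : ModuleCat.{u} R) (hG : Projective G)
    (a : X' ⟶ G) (b : G ⟶ X')
    (hab : a ≫ b = r • 𝟙 X')
    (n : ℕ) (e : ((Ext R (ModuleCat.{u} R) (n+1)).obj (Opposite.op X')).obj Y') :
    r • e = 0 := by
  classical
  obtain ⟨P⟩ : Nonempty (ProjectiveResolution X') := HasProjectiveResolution.out
  -- the lift of `b` through `P.π.f 0`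
  let π₀ : P.complex.X 0 ⟶ X' := P.π.f 0
  have hepi : Epi π₀ := by show Epi (P.π.f 0); infer_instance
  let bt : G ⟶ P.complex.X 0 := Projective.factorThru b π₀
  have hbt : bt ≫ π₀ = b := Projective.factorThru_comp b π₀
  -- the chain map ψ lifting `r • 𝟙 X'`, vanishing in positive degrees
  let ψ : P.complex ⟶ P.complex :=
    { f := fun n => match n with
        | 0 => π₀ ≫ a ≫ bt
        | _+1 => 0
      comm' := by
        rintro i j (rfl : j + 1 = i)
        match j with
        | 0 =>
          rw [Limits.zero_comp, ← Category.assoc, ← Category.assoc,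
            show P.complex.d (0+1) 0 ≫ π₀ = 0 from P.complex_d_comp_π_f_zero, Limits.zero_comp, Limits.zero_comp]
        | k+1 =>
          rw [Limits.zero_comp, Limits.comp_zero] }
  -- ψ lifts `r • 𝟙 X'`
  have hψπ : ψ ≫ P.π = P.π ≫ (ChainComplex.single₀ (ModuleCat.{u} R)).map (r • 𝟙 X') := by
    apply HomologicalComplex.hom_ext
    intro m
    match m with
    | 0 =>
      show (π₀ ≫ a ≫ bt) ≫ P.π.f 0 = P.π.f 0 ≫ ((ChainComplex.single₀ _).map (r • 𝟙 X')).f 0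
      rw [ChainComplex.single₀_map_f_zero]
      show (π₀ ≫ a ≫ bt) ≫ π₀ = π₀ ≫ (r • 𝟙 X')
      rw [Category.assoc, Category.assoc, hbt, hab]
    | m+1 =>
      apply (HomologicalComplex.isZero_single_obj_X
        (ComplexShape.down ℕ) 0 X' (m+1) (by simp)).eq_of_tgt
  have hrπ : (r • 𝟙 P.complex) ≫ P.π
      = P.π ≫ (ChainComplex.single₀ (ModuleCat.{u} R)).map (r • 𝟙 X') := by
    apply HomologicalComplex.hom_ext
    intro m
    match m with
    | 0 =>
      show ((r • 𝟙 P.complex).f 0) ≫ P.π.f 0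
        = P.π.f 0 ≫ ((ChainComplex.single₀ _).map (r • 𝟙 X')).f 0
      rw [ChainComplex.single₀_map_f_zero, HomologicalComplex.smul_f_apply]
      show (r • 𝟙 (P.complex.X 0)) ≫ π₀ = π₀ ≫ (r • 𝟙 X')
      rw [Linear.smul_comp, Linear.comp_smul, Category.id_comp, Category.comp_id]
    | m+1 =>
      apply (HomologicalComplex.isZero_single_obj_X
        (ComplexShape.down ℕ) 0 X' (m+1) (by simp)).eq_of_tgt
  let H : Homotopy ψ (r • 𝟙 P.complex) :=
    ProjectiveResolution.liftHomotopy (r • 𝟙 X') ψ (r • 𝟙 P.complex) hψπ hrπ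
  have key : r • (𝟙 (P.complex.X (n+1)))
      = -(P.complex.d (n+1) n ≫ H.hom n (n+1))
        - (H.hom (n+1) (n+2) ≫ P.complex.d (n+2) (n+1)) := by
    have hc := H.comm (n+1)
    rw [dNext_eq H.hom (show (ComplexShape.down ℕ).Rel (n+1) n by simp),
      prevD_eq H.hom (show (ComplexShape.down ℕ).Rel (n+2) (n+1) by simp)] at hc
    have hψ0 : ψ.f (n+1) = 0 := rfl
    rw [hψ0, HomologicalComplex.smul_f_apply, HomologicalComplex.id_f] at hc
    rw [← sub_eq_zero]
    calc r • (𝟙 (P.complex.X (n+1)))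
          - (-(P.complex.d (n+1) n ≫ H.hom n (n+1))
            - (H.hom (n+1) (n+2) ≫ P.complex.d (n+2) (n+1)))
        = P.complex.d (n+1) n ≫ H.hom n (n+1)
            + H.hom (n+1) (n+2) ≫ P.complex.d (n+2) (n+1)
            + r • (𝟙 (P.complex.X (n+1))) := by abel
      _ = 0 := hc.symm
  -- now compute in the concrete homology of the Hom complex
  let K := P.complex.linearYonedaObj R Y'
  have h1 : (ComplexShape.up ℕ).prev (n+1) = n := by simp
  have h2 : (ComplexShape.up ℕ).next (n+1) = n+2 := by simp
  let T := K.sc' n (n+1) (n+2)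
  let Φ : (((Ext R (ModuleCat.{u} R) (n+1)).obj (Opposite.op X')).obj Y')
      ≅ T.moduleCatLeftHomologyData.H :=
    P.isoExt (n+1) Y' ≪≫ K.homologyIsoSc' n (n+1) (n+2) h1 h2 ≪≫ T.moduleCatHomologyIso
  have main : ∀ y : T.moduleCatLeftHomologyData.H, r • y = 0 := by
    intro y
    obtain ⟨⟨(z : P.complex.X (n+1) ⟶ Y'), hz⟩, rfl⟩ := Submodule.Quotient.mk_surjective _ y
    refine (Submodule.Quotient.mk_smul ..).symm.trans ?_
    refine (Submodule.Quotient.mk_eq_zero _).mpr ?_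
    refine ⟨-(H.hom n (n+1) ≫ z), ?_⟩
    apply Subtype.ext
    show T.f (-(H.hom n (n+1) ≫ z)) = r • z
    have hzc : P.complex.d (n+2) (n+1) ≫ z = 0 := hz
    have : T.f (-(H.hom n (n+1) ≫ z)) = P.complex.d (n+1) n ≫ (-(H.hom n (n+1) ≫ z)) := rfl
    rw [this]
    have hz2 : r • z = (r • 𝟙 (P.complex.X (n+1))) ≫ z := by
      rw [Linear.smul_comp, Category.id_comp]
    rw [hz2, key]
    simp only [Preadditive.sub_comp, Preadditive.neg_comp, Category.assoc, hzc,
      Limits.comp_zero, sub_zero, Preadditive.comp_neg]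
    rfl
  have he : Φ.hom (r • e) = 0 := by
    have : Φ.hom (r • e) = r • Φ.hom e := map_smul Φ.hom.hom r e
    rw [this, main]
  have hfin : (Φ.hom ≫ Φ.inv) (r • e) = Φ.inv 0 := by
    show Φ.inv (Φ.hom (r • e)) = Φ.inv 0
    rw [he]
  rw [Φ.hom_inv_id] at hfin
  rw [map_zero] at hfin
  exact hfin

/-- Multiplication by an element killing `N` on a `k`-th syzygy of `N` factors
through a finite free module. -/
lemma syz_factor {A : Type u} [CommRing A] [IsLocalRing A] (x : A) :
    ∀ (k : ℕ) (M' : Type u) [AddCommGroup M'] [Module A M']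
      (N : Type u) [AddCommGroup N] [Module A N],
      IsMinimalSyzygy A k M' N → (∀ y : N, x • y = 0) →
      ∃ (F : Type u) (_ : AddCommGroup F) (_ : Module A F),
        Module.Free A F ∧ Module.Finite A F ∧
        ∃ (α : M' →ₗ[A] F) (β : F →ₗ[A] M'), ∀ m, β (α m) = x • m := by
  intro k
  induction k with
  | zero =>
    intro M' _ _ N _ _ hsyz hx
    obtain ⟨eq⟩ := hsyz
    refine ⟨A, inferInstance, inferInstance, inferInstance, inferInstance, 0, 0, ?_⟩
    intro m
    have h0 : eq (x • m) = 0 := by rw [map_smul, hx]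
    have : x • m = 0 := by
      apply eq.injective
      rw [h0, map_zero]
    simp [this]
  | succ k ih =>
    intro M' _ _ N _ _ hsyz hx
    obtain ⟨F, _, _, hfree, hfin, ι, hinj, _, hq⟩ := hsyz
    obtain ⟨G, _, _, hGfree, hGfin, α', β', hαβ⟩ := ih (F ⧸ LinearMap.range ι) N hq hx
    haveI := hGfree
    obtain ⟨βt, hβt⟩ := Module.projective_lifting_property (LinearMap.range ι).mkQ β'
      (Submodule.mkQ_surjective _)
    set γ : F →ₗ[A] F := βt ∘ₗ α' ∘ₗ (LinearMap.range ι).mkQ with hγ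
    set δ : F →ₗ[A] F := x • (LinearMap.id : F →ₗ[A] F) - γ with hδ
    have hmem : ∀ v : F, δ v ∈ LinearMap.range ι := by
      intro v
      have h1 : (LinearMap.range ι).mkQ (δ v) = 0 := by
        have h2 : (LinearMap.range ι).mkQ (γ v)
            = β' (α' ((LinearMap.range ι).mkQ v)) := by
          rw [hγ]
          show ((LinearMap.range ι).mkQ ∘ₗ βt) (α' ((LinearMap.range ι).mkQ v)) = _
          rw [hβt]
        rw [hδ, LinearMap.sub_apply, map_sub, h2, hαβ, LinearMap.smul_apply,
          LinearMap.id_apply, map_smul, sub_self]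
      rwa [← LinearMap.mem_ker, Submodule.ker_mkQ] at h1
    refine ⟨F, inferInstance, inferInstance, hfree, hfin, ι,
      (LinearEquiv.ofInjective ι hinj).symm.toLinearMap ∘ₗ
        LinearMap.codRestrict (LinearMap.range ι) δ hmem, ?_⟩
    intro m
    have hγι : γ (ι m) = 0 := by
      rw [hγ]
      show βt (α' ((LinearMap.range ι).mkQ (ι m))) = 0
      have : (LinearMap.range ι).mkQ (ι m) = 0 := by
        rw [← LinearMap.mem_ker, Submodule.ker_mkQ]
        exact ⟨m, rfl⟩
      rw [this, map_zero, map_zero]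
    have hval : LinearMap.codRestrict (LinearMap.range ι) δ hmem (ι m)
        = LinearEquiv.ofInjective ι hinj (x • m) := by
      apply Subtype.ext
      show δ (ι m) = _
      rw [hδ, LinearMap.sub_apply, LinearMap.smul_apply, LinearMap.id_apply, hγι, sub_zero]
      have : ((LinearEquiv.ofInjective ι hinj) (x • m) : F) = ι (x • m) := rfl
      rw [this, map_smul]
    show (LinearEquiv.ofInjective ι hinj).symm
        (LinearMap.codRestrict (LinearMap.range ι) δ hmem (ι m)) = x • m
    rw [hval, LinearEquiv.symm_apply_apply]

end AuxExt

/-- let `(A,m)` be an abstract complete intersection of dimension `d > 0`,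
`P` a prime with `height(m/P) = 1` (i.e. `dim A/P = 1`), `f ∈ m \ P` and `M` the `d`-th
syzygy of `A/P`. Then for `i > 0` the support of `Ext^i_{A_f}(M_f, M_f)` is contained in
the maximal ideal `P·A_f` of `A_f`. -/
theorem stmt9 (A : Type u) [CommRing A] [IsLocalRing A]
    (hA : ∃ c, IsCompleteIntersectionOfCodim A c)
    (d : ℕ) (hd : ringKrullDim A = d) (hd0 : 0 < d)
    (P : Ideal A) (hP : P.IsPrime) (hht : ringKrullDim (A ⧸ P) = 1)
    (f : A) (hfm : f ∈ IsLocalRing.maximalIdeal A) (hfP : f ∉ P)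
    (M : Type u) [AddCommGroup M] [Module A M]
    (hM : IsMinimalSyzygy A d M (A ⧸ P)) :
    ∀ i : ℕ, 0 < i →
      ∀ q ∈ Module.support (Localization.Away f)
        (extMod (Localization.Away f) i
          (LocalizedModule (Submonoid.powers f) M)
          (LocalizedModule (Submonoid.powers f) M)),
        q.asIdeal = Ideal.map (algebraMap A (Localization.Away f)) P := by
  intro i hi q hq
  classical
  set B := Localization.Away f with hB
  set S := Submonoid.powers f with hS
  set Mf := LocalizedModule S M with hMf
  -- Step 1: `P·B` annihilates the Ext module
  have hann : Ideal.map (algebraMap A B) P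
      ≤ Module.annihilator B (extMod B i Mf Mf) := by
    rw [Ideal.map_le_iff_le_comap]
    intro x hx
    rw [Ideal.mem_comap, Module.mem_annihilator]
    intro e
    -- multiplication by `x` kills `A ⧸ P`
    have hxN : ∀ y : A ⧸ P, x • y = 0 := by
      intro y
      obtain ⟨a, rfl⟩ := Ideal.Quotient.mk_surjective y
      have : x • (Ideal.Quotient.mk P a) = Ideal.Quotient.mk P (x * a) := rfl
      rw [this, Ideal.Quotient.eq_zero_iff_mem]
      exact P.mul_mem_right a hx
    obtain ⟨F, _, _, hfree, hfin, α, β, hfac⟩ := syz_factor x d M (A ⧸ P) hM hxN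
    -- localize the factorization
    haveI : Module.Free B (LocalizedModule S F) :=
      Module.free_of_isLocalizedModule (Rₛ := B) S (LocalizedModule.mkLinearMap S F)
    let G : ModuleCat.{u} B := ModuleCat.of B (LocalizedModule S F)
    have hGproj : Projective G :=
      ModuleCat.projective_of_free (Module.Free.chooseBasis B (LocalizedModule S F))
    let a : ModuleCat.of B Mf ⟶ G := ModuleCat.ofHom (LocalizedModule.map S α)
    let b : G ⟶ ModuleCat.of B Mf := ModuleCat.ofHom (LocalizedModule.map S β)
    have hab : a ≫ b = (algebraMap A B x) • 𝟙 (ModuleCat.of B Mf) := by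
      apply ModuleCat.hom_ext
      apply LinearMap.ext
      intro u
      show (LocalizedModule.map S β) ((LocalizedModule.map S α) u) = (algebraMap A B x) • u
      induction u using LocalizedModule.induction_on with
      | h m s =>
        rw [LocalizedModule.map_mk, LocalizedModule.map_mk, hfac,
          ← Localization.mk_one_eq_algebraMap, LocalizedModule.mk_smul_mk, one_mul]
    obtain ⟨n, rfl⟩ : ∃ n, i = n + 1 := ⟨i - 1, (Nat.succ_pred_eq_of_pos hi).symm⟩
    exact ext_ann' (ModuleCat.of B Mf) (ModuleCat.of B Mf) (algebraMap A B x) G hGproj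
      a b hab n e
  have hq' : Ideal.map (algebraMap A B) P ≤ q.asIdeal :=
    le_trans hann (Module.annihilator_le_of_mem_support hq)
  -- Step 2: the contraction of `q` is `P`
  haveI := hP
  set p := Ideal.comap (algebraMap A B) q.asIdeal with hp
  haveI hpprime : p.IsPrime := Ideal.IsPrime.comap _
  have hPp : P ≤ p := Ideal.map_le_iff_le_comap.mp hq'
  have hfp : f ∉ p := by
    intro hf
    have hu : IsUnit (algebraMap A B f) :=
      IsLocalization.map_units B (⟨f, Submonoid.mem_powers f⟩ : S)
    exact q.2.ne_top (Ideal.eq_top_of_isUnit_mem _ (Ideal.mem_comap.mp hf) hu)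
  have hpm : p ≤ IsLocalRing.maximalIdeal A := IsLocalRing.le_maximalIdeal hpprime.ne_top
  have hpP : p = P := by
    by_contra hne
    have h1 : P < p := lt_of_le_of_ne hPp (Ne.symm hne)
    have h2 : p < IsLocalRing.maximalIdeal A :=
      lt_of_le_of_ne hpm (fun h => hfp (h ▸ hfm))
    -- build a chain of primes of length 2 in `A ⧸ P`
    haveI : IsDomain (A ⧸ P) := Ideal.Quotient.isDomain P
    have hker : RingHom.ker (Ideal.Quotient.mk P) = P := Ideal.mk_ker
    have hmkSurj : Function.Surjective (Ideal.Quotient.mk P) := Ideal.Quotient.mk_surjective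
    have hprime1 : (Ideal.map (Ideal.Quotient.mk P) p).IsPrime :=
      Ideal.map_isPrime_of_surjective hmkSurj (by rw [hker]; exact hPp)
    haveI : (IsLocalRing.maximalIdeal A).IsPrime := inferInstance
    have hprime2 : (Ideal.map (Ideal.Quotient.mk P) (IsLocalRing.maximalIdeal A)).IsPrime :=
      Ideal.map_isPrime_of_surjective hmkSurj (by rw [hker]; exact le_trans hPp hpm)
    have hcomapp : Ideal.comap (Ideal.Quotient.mk P) (Ideal.map (Ideal.Quotient.mk P) p) = p := by
      rw [Ideal.comap_map_of_surjective _ hmkSurj, ← RingHom.ker_eq_comap_bot, hker,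
        sup_eq_left.mpr hPp]
    have hcomapm : Ideal.comap (Ideal.Quotient.mk P)
        (Ideal.map (Ideal.Quotient.mk P) (IsLocalRing.maximalIdeal A))
        = IsLocalRing.maximalIdeal A := by
      rw [Ideal.comap_map_of_surjective _ hmkSurj, ← RingHom.ker_eq_comap_bot, hker,
        sup_eq_left.mpr (le_trans hPp hpm)]
    let x0 : PrimeSpectrum (A ⧸ P) := ⟨⊥, Ideal.bot_prime⟩
    let x1 : PrimeSpectrum (A ⧸ P) := ⟨Ideal.map (Ideal.Quotient.mk P) p, hprime1⟩
    let x2 : PrimeSpectrum (A ⧸ P) :=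
      ⟨Ideal.map (Ideal.Quotient.mk P) (IsLocalRing.maximalIdeal A), hprime2⟩
    have h01 : x0 < x1 := by
      show x0.asIdeal < x1.asIdeal
      refine lt_of_le_of_ne bot_le ?_
      obtain ⟨y, hyp, hyP⟩ := SetLike.exists_of_lt h1
      intro hbot
      have h0 : Ideal.Quotient.mk P y ∈ x1.asIdeal := Ideal.mem_map_of_mem _ hyp
      rw [← hbot] at h0
      have h0' : Ideal.Quotient.mk P y ∈ (⊥ : Ideal (A ⧸ P)) := h0
      rw [Ideal.mem_bot] at h0'
      exact hyP (Ideal.Quotient.eq_zero_iff_mem.mp h0')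
    have h12 : x1 < x2 := by
      show x1.asIdeal < x2.asIdeal
      refine lt_of_le_of_ne (Ideal.map_mono h2.le) ?_
      intro heq
      have heq' : Ideal.map (Ideal.Quotient.mk P) p
          = Ideal.map (Ideal.Quotient.mk P) (IsLocalRing.maximalIdeal A) :=
        heq
      have : p = IsLocalRing.maximalIdeal A := by
        rw [← hcomapp, ← hcomapm, heq']
      exact h2.ne this
    have hchain : ((((RelSeries.singleton _ x0).snoc x1 (by exact h01)).snoc x2 (by exact h12) :
        LTSeries (PrimeSpectrum (A ⧸ P))).length : WithBot ℕ∞)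
        ≤ Order.krullDim (PrimeSpectrum (A ⧸ P)) :=
      Order.LTSeries.length_le_krullDim _
    rw [show (((RelSeries.singleton _ x0).snoc x1 (by exact h01)).snoc x2 (by exact h12) :
        LTSeries (PrimeSpectrum (A ⧸ P))).length = 2 from rfl] at hchain
    rw [show Order.krullDim (PrimeSpectrum (A ⧸ P)) = ringKrullDim (A ⧸ P) from rfl,
      hht] at hchain
    norm_num at hchain
  -- Step 3: conclude
  have := IsLocalization.map_comap S B q.asIdeal
  rw [← this]
  exact congrArg (Ideal.map (algebraMap A B)) hpP
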